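/- Let q = 3^m with m odd and 3 ∤ m. With S(α,β,γ) = Σ_{x∈F_q} ζ₃^{Tr(αx² + βx⁴ + γx¹⁰)}, one has Σ_{α,β,γ ∈ F_q} S(α,β,γ)⁴ = (8(3^m − 1)² + 1)·3^{3m}. -/

import Mathlib

attribute [local instance] ZMod.algebra

namespace FourthMomentAux

open Finset
open scoped Classical

variable {F : Type*} [Field F] [CharP F 3]

lemma char3' : (3 : F) = 0 := by
  have := CharP.cast_eq_zero F 3
  exact_mod_cast this

lemma neg_self_ne {a : F} (ha : a ≠ 0) : a ≠ -a := by
  intro h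
  exact ha (by linear_combination -h + a * (char3' (F := F)))

lemma fst_ne {α : Type*} {x y : α × α} (h : x.1 ≠ y.1) : x ≠ y :=
  fun hh => h (congrArg Prod.fst hh)

lemma pow_val_mod {ζ : ℂ} (hζ3 : ζ ^ 3 = 1) (n : ℕ) : ζ ^ (n % 3) = ζ ^ n := by
  conv_rhs => rw [← Nat.div_add_mod n 3, pow_add, pow_mul, hζ3, one_pow, one_mul]

lemma e_add {ζ : ℂ} (hζ3 : ζ ^ 3 = 1) (a b : ZMod 3) :
    ζ ^ (a + b).val = ζ ^ a.val * ζ ^ b.val := by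
  rw [ZMod.val_add, pow_val_mod hζ3, pow_add]

lemma zeta_sq_ne_one {ζ : ℂ} (hζ3 : ζ ^ 3 = 1) (hζ1 : ζ ≠ 1) : ζ ^ 2 ≠ 1 := by
  intro h
  apply hζ1
  have : ζ * ζ ^ 2 = ζ ^ 3 := by ring
  rw [h, hζ3, mul_one] at this
  exact this

lemma char_sum [Fintype F] {ζ : ℂ} (hζ3 : ζ ^ 3 = 1) (hζ1 : ζ ≠ 1) (t : F) :
    (∑ α : F, ζ ^ (Algebra.trace (ZMod 3) F (α * t)).val)
      = if t = 0 then (Fintype.card F : ℂ) else 0 := by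
  haveI : Fact (Nat.Prime 3) := ⟨by norm_num⟩
  split_ifs with ht
  · subst ht
    simp only [mul_zero, map_zero, ZMod.val_zero, pow_zero]
    simp [Finset.card_univ]
  · set ψ : AddChar F ℂ :=
      { toFun := fun α => ζ ^ (Algebra.trace (ZMod 3) F (α * t)).val
        map_zero_eq_one' := by simp
        map_add_eq_mul' := by
          intro a b
          show ζ ^ (Algebra.trace (ZMod 3) F ((a + b) * t)).val = _
          rw [add_mul, map_add, e_add hζ3] } with hψ
    have hsum : ∑ α : F, ψ α = 0 := by
      rw [AddChar.sum_eq_zero_iff_ne_zero, AddChar.ne_zero_iff]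
      obtain ⟨b, hb⟩ : ∃ b : F, Algebra.trace (ZMod 3) F (t * b) ≠ 0 := by
        have htr := (traceForm_nondegenerate (ZMod 3) F).1 t
        simp_rw [Algebra.traceForm_apply] at htr
        by_contra! hf
        exact ht (htr hf)
      refine ⟨b, ?_⟩
      show ζ ^ (Algebra.trace (ZMod 3) F (b * t)).val ≠ 1
      rw [mul_comm]
      set c := Algebra.trace (ZMod 3) F (t * b)
      have hcv : c.val = 1 ∨ c.val = 2 := by
        have := ZMod.val_lt c
        interval_cases h : c.val
        · exact absurd (by rwa [← ZMod.val_eq_zero]) hb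
        · left; rfl
        · right; rfl
      rcases hcv with h | h <;> rw [h]
      · simpa using hζ1
      · exact zeta_sq_ne_one hζ3 hζ1
    simpa [hψ] using hsum

lemma red (x y z w : F) (h1 : x^2+y^2+z^2+w^2 = 0) (h2 : x^4+y^4+z^4+w^4 = 0) :
    x^10+y^10+z^10+w^10 = 0 := by
  have h3 : (3 : F) = 0 := char3'
  linear_combination (4*(x^8+y^8+z^8+w^8) - 4*(x^2*y^2*z^2*w^2)
      - 2*(x^2+y^2+z^2+w^2)*(x^6+y^6+z^6+w^6)) * h1
    + (4*(x^2*y^2*z^2 + x^2*y^2*w^2 + x^2*z^2*w^2 + y^2*z^2*w^2)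
      - 4*(x^6+y^6+z^6+w^6)) * h2
    + (2*(x^4+y^4+z^4+w^4)*(x^6+y^6+z^6+w^6) - (x^10+y^10+z^10+w^10)) * h3

lemma card_cd_zero [Fintype F] :
    ((univ : Finset (F × F)).filter (fun r => r.1 * r.2 = 0)).card
      = 2 * Fintype.card F - 1 := by
  have hset : ((univ : Finset (F × F)).filter (fun r => r.1 * r.2 = 0))
      = (({0} : Finset F) ×ˢ univ) ∪ (univ ×ˢ ({0} : Finset F)) := by
    ext ⟨c, d⟩
    simp [mul_eq_zero, eq_comm]
  have hint : ((({0} : Finset F) ×ˢ univ) ∩ (univ ×ˢ ({0} : Finset F)))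
      = ({0} : Finset F) ×ˢ ({0} : Finset F) := by
    ext ⟨c, d⟩
    simp [Prod.ext_iff, and_comm, eq_comm]
  have := Finset.card_union_add_card_inter (({0} : Finset F) ×ˢ univ)
    (univ ×ˢ ({0} : Finset F))
  rw [hint] at this
  simp only [Finset.card_product, Finset.card_singleton, one_mul, mul_one,
    Finset.card_univ] at this
  rw [hset]
  omega

lemma fiber_ne [Fintype F] {a b : F} (ha : a ≠ 0) (hb : b ≠ 0) :
    ((univ : Finset (F × F)).filter (fun r =>
        a * b + r.1 * r.2 = 0 ∧
        a^3 * b + a * b^3 + r.1^3 * r.2 + r.1 * r.2^3 = 0))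
      = ({(a, -b), (-a, b), (b, -a), (-b, a)} : Finset (F × F)) := by
  ext ⟨c, d⟩
  simp only [Finset.mem_filter, Finset.mem_univ, true_and, Finset.mem_insert,
    Finset.mem_singleton, Prod.mk.injEq]
  constructor
  · rintro ⟨h1, h2⟩
    have hab : a * b ≠ 0 := mul_ne_zero ha hb
    have hc : c ≠ 0 := by
      intro h
      subst h
      exact hab (by linear_combination h1)
    have hsum : a * b * (a^2 + b^2) = a * b * (c^2 + d^2) := by
      linear_combination h2 - (c^2 + d^2) * h1
    have hsum' : a^2 + b^2 = c^2 + d^2 := mul_left_cancel₀ hab hsum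
    have key : (c - a) * (c + a) * ((c - b) * (c + b)) = 0 := by
      linear_combination (a * b - c * d) * h1 + (-(c^2)) * hsum'
    rcases mul_eq_zero.mp key with h | h
    · rcases mul_eq_zero.mp h with h | h
      · have hc' : c = a := by linear_combination h
        subst hc'
        exact Or.inl ⟨rfl, by
          have hcc : c * (d + b) = 0 := by linear_combination h1
          rcases mul_eq_zero.mp hcc with h' | h'
          · exact absurd h' hc
          · linear_combination h'⟩
      · have hc' : c = -a := by linear_combination h
        refine Or.inr (Or.inl ⟨hc', ?_⟩)
        have hcc : c * (d - b) = 0 := by linear_combination h1 - b * hc'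
        rcases mul_eq_zero.mp hcc with h' | h'
        · exact absurd h' hc
        · linear_combination h'
    · rcases mul_eq_zero.mp h with h | h
      · have hc' : c = b := by linear_combination h
        refine Or.inr (Or.inr (Or.inl ⟨hc', ?_⟩))
        have hcc : c * (d + a) = 0 := by linear_combination h1 + a * hc'
        rcases mul_eq_zero.mp hcc with h' | h'
        · exact absurd h' hc
        · linear_combination h'
      · have hc' : c = -b := by linear_combination h
        refine Or.inr (Or.inr (Or.inr ⟨hc', ?_⟩))
        have hcc : c * (d - a) = 0 := by linear_combination h1 - a * hc'
        rcases mul_eq_zero.mp hcc with h' | h'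
        · exact absurd h' hc
        · linear_combination h'
  · rintro (⟨hc, hd⟩ | ⟨hc, hd⟩ | ⟨hc, hd⟩ | ⟨hc, hd⟩) <;> subst hc <;> subst hd <;>
      constructor <;> ring

lemma card_fiber_generic {a b : F} (ha : a ≠ 0) (hb : b ≠ 0) (hba : b ≠ a)
    (hba' : b ≠ -a) :
    ({(a, -b), (-a, b), (b, -a), (-b, a)} : Finset (F × F)).card = 4 := by
  have h2 : a ≠ -a := neg_self_ne ha
  have h2b : b ≠ -b := neg_self_ne hb
  have hab' : a ≠ -b := fun h => hba' (by linear_combination h)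
  have hab'' : a ≠ b := fun h => hba h.symm
  have hanb : (-a : F) ≠ -b := fun h => hab'' (by linear_combination -h)
  have hm3 : ((b, -a) : F × F) ∉ ({(-b, a)} : Finset (F × F)) := by
    simp only [Finset.mem_singleton]
    exact fst_ne h2b
  have hm2 : ((-a, b) : F × F) ∉ ({(b, -a), (-b, a)} : Finset (F × F)) := by
    simp only [Finset.mem_insert, Finset.mem_singleton]
    push_neg
    exact ⟨fst_ne (fun h => hba' h.symm), fst_ne hanb⟩
  have hm1 : ((a, -b) : F × F) ∉ ({(-a, b), (b, -a), (-b, a)} : Finset (F × F)) := by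
    simp only [Finset.mem_insert, Finset.mem_singleton]
    push_neg
    exact ⟨fst_ne h2, fst_ne hab'', fst_ne hab'⟩
  rw [Finset.card_insert_of_notMem hm1, Finset.card_insert_of_notMem hm2,
    Finset.card_insert_of_notMem hm3, Finset.card_singleton]

lemma card_fiber_eq {a : F} (ha : a ≠ 0) :
    ({(a, -a), (-a, a), (a, -a), (-a, a)} : Finset (F × F)).card = 2 := by
  have h2 : a ≠ -a := neg_self_ne ha
  have hs : ({(a, -a), (-a, a), (a, -a), (-a, a)} : Finset (F × F)) = {(a, -a), (-a, a)} := by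
    ext r
    simp only [Finset.mem_insert, Finset.mem_singleton]
    tauto
  rw [hs, Finset.card_pair (fst_ne h2)]

lemma card_fiber_eq' {a : F} (ha : a ≠ 0) :
    ({(a, a), (-a, -a), (-a, -a), (a, a)} : Finset (F × F)).card = 2 := by
  have h2 : a ≠ -a := neg_self_ne ha
  have hs : ({(a, a), (-a, -a), (-a, -a), (a, a)} : Finset (F × F)) = {(a, a), (-a, -a)} := by
    ext r
    simp only [Finset.mem_insert, Finset.mem_singleton]
    tauto
  rw [hs, Finset.card_pair (fst_ne h2)]

lemma sum_ite_count {α : Type*} [Fintype α] (P : α → Prop) [DecidablePred P] (K : ℂ) :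
    (∑ v : α, if P v then K else 0) = ((univ.filter P).card : ℂ) * K := by
  rw [Finset.sum_ite, Finset.sum_const, Finset.sum_const_zero, add_zero, nsmul_eq_mul]

lemma card_diag [Fintype F] :
    ((univ : Finset (F × F)).filter
        (fun p => ¬(p.1 * p.2 = 0) ∧ (p.2 = p.1 ∨ p.2 = -p.1))).card
      = 2 * (Fintype.card F - 1) := by
  have hs0 : ((univ : Finset F).filter (fun a => a ≠ 0)) = univ.erase 0 := by
    ext a; simp [Finset.mem_erase]
  have hc0 : ((univ : Finset F).filter (fun a => a ≠ 0)).card = Fintype.card F - 1 := by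
    rw [hs0, Finset.card_erase_of_mem (Finset.mem_univ 0), Finset.card_univ]
  have hset : ((univ : Finset (F × F)).filter
        (fun p => ¬(p.1 * p.2 = 0) ∧ (p.2 = p.1 ∨ p.2 = -p.1)))
      = (((univ : Finset F).filter (fun a => a ≠ 0)).image (fun a => (a, a)))
        ∪ (((univ : Finset F).filter (fun a => a ≠ 0)).image (fun a => (a, -a))) := by
    ext ⟨a, b⟩
    simp only [Finset.mem_filter, Finset.mem_univ, true_and, Finset.mem_union,
      Finset.mem_image, mul_eq_zero, not_or, Prod.mk.injEq]
    constructor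
    · rintro ⟨⟨ha, hb⟩, h | h⟩
      · exact Or.inl ⟨a, ha, rfl, h.symm⟩
      · exact Or.inr ⟨a, ha, rfl, h.symm⟩
    · rintro (⟨t, ht, rfl, rfl⟩ | ⟨t, ht, rfl, rfl⟩)
      · exact ⟨⟨ht, ht⟩, Or.inl rfl⟩
      · exact ⟨⟨ht, fun h => ht (by linear_combination -h)⟩, Or.inr rfl⟩
  rw [hset, Finset.card_union_of_disjoint, Finset.card_image_of_injective,
    Finset.card_image_of_injective, hc0]
  · ring
  · exact fun x y h => congrArg Prod.fst h
  · exact fun x y h => congrArg Prod.fst h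
  · rw [Finset.disjoint_left]
    rintro ⟨a, b⟩ h1 h2
    simp only [Finset.mem_image, Finset.mem_filter, Finset.mem_univ, true_and,
      Prod.mk.injEq] at h1 h2
    obtain ⟨t, ht, rfl, rfl⟩ := h1
    obtain ⟨u, hu, rfl, h⟩ := h2
    exact neg_self_ne hu h.symm

lemma count_sum [Fintype F] (K : ℂ) :
    (∑ p : F × F, ∑ r : F × F,
        if (p.1 * p.2 + r.1 * r.2 = 0 ∧
            p.1^3 * p.2 + p.1 * p.2^3 + r.1^3 * r.2 + r.1 * r.2^3 = 0)
        then K else 0)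
      = (8 * (Fintype.card F : ℂ)^2 - 16 * (Fintype.card F : ℂ) + 9) * K := by
  have hq1 : 1 ≤ Fintype.card F := Fintype.card_pos
  set q := Fintype.card F with hq
  have hG0 : ∀ p : F × F, p.1 * p.2 = 0 →
      (∑ r : F × F, if (p.1 * p.2 + r.1 * r.2 = 0 ∧
            p.1^3 * p.2 + p.1 * p.2^3 + r.1^3 * r.2 + r.1 * r.2^3 = 0)
        then K else 0) = ((2 * q - 1 : ℕ) : ℂ) * K := by
    intro p hp
    have hiff : ∀ r : F × F, (p.1 * p.2 + r.1 * r.2 = 0 ∧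
            p.1^3 * p.2 + p.1 * p.2^3 + r.1^3 * r.2 + r.1 * r.2^3 = 0)
        ↔ r.1 * r.2 = 0 := by
      intro r
      constructor
      · rintro ⟨h1, _⟩; linear_combination h1 - hp
      · intro h
        refine ⟨by linear_combination hp + h, ?_⟩
        linear_combination (p.1^2 + p.2^2) * hp + (r.1^2 + r.2^2) * h
    rw [Finset.sum_congr rfl (fun r _ => if_congr (hiff r) (rfl : K = K) rfl),
      sum_ite_count, card_cd_zero]
  have hG2 : ∀ p : F × F, ¬(p.1 * p.2 = 0) → (p.2 = p.1 ∨ p.2 = -p.1) →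
      (∑ r : F × F, if (p.1 * p.2 + r.1 * r.2 = 0 ∧
            p.1^3 * p.2 + p.1 * p.2^3 + r.1^3 * r.2 + r.1 * r.2^3 = 0)
        then K else 0) = 2 * K := by
    rintro p hab h
    have ha : p.1 ≠ 0 := fun h0 => hab (by rw [h0, zero_mul])
    rcases h with h | h
    · rw [h, sum_ite_count, fiber_ne ha ha, card_fiber_eq ha]
      norm_num
    · rw [h, sum_ite_count, fiber_ne ha (neg_ne_zero.mpr ha)]
      simp only [neg_neg]
      rw [card_fiber_eq' ha]
      norm_num
  have hG4 : ∀ p : F × F, ¬(p.1 * p.2 = 0) → ¬(p.2 = p.1 ∨ p.2 = -p.1) →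
      (∑ r : F × F, if (p.1 * p.2 + r.1 * r.2 = 0 ∧
            p.1^3 * p.2 + p.1 * p.2^3 + r.1^3 * r.2 + r.1 * r.2^3 = 0)
        then K else 0) = 4 * K := by
    rintro p hab h
    push_neg at h
    obtain ⟨hba, hba'⟩ := h
    have ha : p.1 ≠ 0 := fun h0 => hab (by rw [h0, zero_mul])
    have hb : p.2 ≠ 0 := fun h0 => hab (by rw [h0, mul_zero])
    rw [sum_ite_count, fiber_ne ha hb, card_fiber_generic ha hb hba hba']
    norm_num
  rw [← Finset.sum_filter_add_sum_filter_not univ (fun p : F × F => p.1 * p.2 = 0),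
    ← Finset.sum_filter_add_sum_filter_not
      (univ.filter (fun p : F × F => ¬(p.1 * p.2 = 0)))
      (fun p : F × F => p.2 = p.1 ∨ p.2 = -p.1)]
  have S1 : (∑ p ∈ univ.filter (fun p : F × F => p.1 * p.2 = 0),
      ∑ r : F × F, if (p.1 * p.2 + r.1 * r.2 = 0 ∧
            p.1^3 * p.2 + p.1 * p.2^3 + r.1^3 * r.2 + r.1 * r.2^3 = 0)
        then K else 0)
      = (2 * q - 1 : ℕ) • (((2 * q - 1 : ℕ) : ℂ) * K) := by
    rw [Finset.sum_congr rfl (fun p hp => hG0 p (Finset.mem_filter.mp hp).2),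
      Finset.sum_const, card_cd_zero]
  have S2 : (∑ p ∈ (univ.filter (fun p : F × F => ¬(p.1 * p.2 = 0))).filter
        (fun p : F × F => p.2 = p.1 ∨ p.2 = -p.1),
      ∑ r : F × F, if (p.1 * p.2 + r.1 * r.2 = 0 ∧
            p.1^3 * p.2 + p.1 * p.2^3 + r.1^3 * r.2 + r.1 * r.2^3 = 0)
        then K else 0)
      = (2 * (q - 1) : ℕ) • (2 * K) := by
    rw [Finset.sum_congr rfl (fun p hp => by
        have h := Finset.mem_filter.mp hp
        exact hG2 p (Finset.mem_filter.mp h.1).2 h.2),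
      Finset.sum_const]
    congr 1
    rw [Finset.filter_filter]
    exact card_diag
  have S3 : (∑ p ∈ (univ.filter (fun p : F × F => ¬(p.1 * p.2 = 0))).filter
        (fun p : F × F => ¬(p.2 = p.1 ∨ p.2 = -p.1)),
      ∑ r : F × F, if (p.1 * p.2 + r.1 * r.2 = 0 ∧
            p.1^3 * p.2 + p.1 * p.2^3 + r.1^3 * r.2 + r.1 * r.2^3 = 0)
        then K else 0)
      = (((univ : Finset (F × F)).filter (fun p : F × F =>
          ¬(p.1 * p.2 = 0) ∧ ¬(p.2 = p.1 ∨ p.2 = -p.1))).card : ℕ) • (4 * K) := by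
    rw [Finset.sum_congr rfl (fun p hp => by
        have h := Finset.mem_filter.mp hp
        exact hG4 p (Finset.mem_filter.mp h.1).2 h.2),
      Finset.sum_const, Finset.filter_filter]
  rw [S1, S2, S3]
  set n3 := ((univ : Finset (F × F)).filter (fun p : F × F =>
      ¬(p.1 * p.2 = 0) ∧ ¬(p.2 = p.1 ∨ p.2 = -p.1))).card with hn3
  have hpart : (2 * q - 1) + (2 * (q - 1) + n3) = q * q := by
    have e1 := Finset.card_filter_add_card_filter_not
      (s := (univ : Finset (F × F))) (p := fun p : F × F => p.1 * p.2 = 0)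
    have e2 := Finset.card_filter_add_card_filter_not
      (s := univ.filter (fun p : F × F => ¬(p.1 * p.2 = 0)))
      (p := fun p : F × F => p.2 = p.1 ∨ p.2 = -p.1)
    simp only [Finset.filter_filter] at e2
    rw [← e2] at e1
    rw [card_cd_zero, card_diag, ← hn3] at e1
    simpa [Finset.card_univ, Fintype.card_prod] using e1
  have hcast : ((2 * q - 1 : ℕ) : ℂ) = 2 * (q : ℂ) - 1 := by
    push_cast [Nat.cast_sub (by omega : 1 ≤ 2 * q)]; ring
  have hcast2 : ((2 * (q - 1) : ℕ) : ℂ) = 2 * (q : ℂ) - 2 := by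
    push_cast [Nat.cast_sub hq1]; ring
  have hcast3 : (n3 : ℂ) = (q : ℂ) * q - (2 * (q : ℂ) - 1) - (2 * (q : ℂ) - 2) := by
    have hc := congrArg (fun n : ℕ => (n : ℂ)) hpart
    push_cast [Nat.cast_sub (by omega : 1 ≤ 2 * q), Nat.cast_sub hq1] at hc
    linear_combination hc
  simp only [nsmul_eq_mul]
  rw [hcast, hcast2, hcast3]
  ring

lemma count_sum' [Fintype F] (K : ℂ) :
    (∑ v : (F × F) × (F × F),
        if (v.1.1 * v.1.2 + v.2.1 * v.2.2 = 0 ∧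
            v.1.1^3 * v.1.2 + v.1.1 * v.1.2^3 + v.2.1^3 * v.2.2 + v.2.1 * v.2.2^3 = 0)
        then K else 0)
      = (8 * (Fintype.card F : ℂ)^2 - 16 * (Fintype.card F : ℂ) + 9) * K := by
  rw [Fintype.sum_prod_type]
  exact count_sum K

lemma sum_pow_four {G : Type*} [Fintype G] (f : G → ℂ) :
    (∑ x : G, f x)^4
      = ∑ x : G, ∑ y : G, ∑ z : G, ∑ w : G, (f x * f y) * (f z * f w) := by
  have h2 : ∀ (g h : G → ℂ), (∑ x : G, g x) * (∑ y : G, h y)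
      = ∑ x : G, ∑ y : G, g x * h y := fun g h => Finset.sum_mul_sum univ univ g h
  calc (∑ x : G, f x)^4
      = ((∑ x : G, f x) * (∑ x : G, f x)) * ((∑ x : G, f x) * (∑ x : G, f x)) := by ring
    _ = (∑ x : G, ∑ y : G, f x * f y) * (∑ z : G, ∑ w : G, f z * f w) := by rw [h2, h2]
    _ = ∑ x : G, ∑ z : G, (∑ y : G, f x * f y) * (∑ w : G, f z * f w) := h2 _ _
    _ = ∑ x : G, ∑ z : G, ∑ y : G, ∑ w : G, (f x * f y) * (f z * f w) :=
        Finset.sum_congr rfl fun x _ => Finset.sum_congr rfl fun z _ => h2 _ _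
    _ = ∑ x : G, ∑ y : G, ∑ z : G, ∑ w : G, (f x * f y) * (f z * f w) := by
        conv_lhs => enter [2, x]; rw [Finset.sum_comm]

lemma factor3 {G : Type*} [Fintype G] (A B C : G → ℂ) :
    (∑ α : G, ∑ β : G, ∑ γ : G, A α * B β * C γ)
      = (∑ α : G, A α) * (∑ β : G, B β) * (∑ γ : G, C γ) := by
  simp only [← Finset.sum_mul, ← Finset.mul_sum]

lemma swap7 {G : Type*} [Fintype G] (g : G → G → G → G → G → G → G → ℂ) :
    (∑ α : G, ∑ β : G, ∑ γ : G, ∑ x : G, ∑ y : G, ∑ z : G, ∑ w : G, g α β γ x y z w)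
      = ∑ x : G, ∑ y : G, ∑ z : G, ∑ w : G, ∑ α : G, ∑ β : G, ∑ γ : G, g α β γ x y z w := by
  conv_lhs => enter [2, α, 2, β]; rw [Finset.sum_comm]
  conv_lhs => enter [2, α]; rw [Finset.sum_comm]
  rw [Finset.sum_comm]
  conv_lhs => enter [2, x, 2, α, 2, β]; rw [Finset.sum_comm]
  conv_lhs => enter [2, x, 2, α]; rw [Finset.sum_comm]
  conv_lhs => enter [2, x]; rw [Finset.sum_comm]
  conv_lhs => enter [2, x, 2, y, 2, α, 2, β]; rw [Finset.sum_comm]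
  conv_lhs => enter [2, x, 2, y, 2, α]; rw [Finset.sum_comm]
  conv_lhs => enter [2, x, 2, y]; rw [Finset.sum_comm]
  conv_lhs => enter [2, x, 2, y, 2, z, 2, α, 2, β]; rw [Finset.sum_comm]
  conv_lhs => enter [2, x, 2, y, 2, z, 2, α]; rw [Finset.sum_comm]
  conv_lhs => enter [2, x, 2, y, 2, z]; rw [Finset.sum_comm]

lemma collapse4 {G : Type*} [Fintype G] (f : G → G → G → G → ℂ) :
    (∑ v : (G × G) × (G × G), f v.1.1 v.1.2 v.2.1 v.2.2)
      = ∑ x : G, ∑ y : G, ∑ z : G, ∑ w : G, f x y z w := by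
  simp [Fintype.sum_prod_type]

def covEquiv (F : Type*) [Field F] [CharP F 3] :
    (F × F) × (F × F) ≃ (F × F) × (F × F) where
  toFun v := ((v.2.1 - v.2.2, v.1.1 + v.1.2 + v.2.1 + v.2.2),
              (v.1.1 + v.1.2 - v.2.1 - v.2.2, v.1.1 - v.1.2))
  invFun v := ((v.1.2 + v.2.1 - v.2.2, v.1.2 + v.2.1 + v.2.2),
               (-v.1.1 + v.1.2 - v.2.1, v.1.1 + v.1.2 - v.2.1))
  left_inv := by
    rintro ⟨⟨a, b⟩, ⟨c, d⟩⟩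
    have h3 : (3 : F) = 0 := char3'
    simp only [Prod.mk.injEq]
    refine ⟨⟨?_, ?_⟩, ?_, ?_⟩
    · linear_combination b * h3
    · linear_combination a * h3
    · linear_combination d * h3
    · linear_combination c * h3
  right_inv := by
    rintro ⟨⟨x, y⟩, ⟨z, w⟩⟩
    have h3 : (3 : F) = 0 := char3'
    simp only [Prod.mk.injEq]
    refine ⟨⟨?_, ?_⟩, ?_, ?_⟩
    · linear_combination (-x) * h3
    · linear_combination y * h3
    · linear_combination z * h3
    · linear_combination (-w) * h3

lemma cond_iff (a b c d : F) :
    ((c-d)^2 + (a+b+c+d)^2 + (a+b-c-d)^2 + (a-b)^2 = 0 ∧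
     (c-d)^4 + (a+b+c+d)^4 + (a+b-c-d)^4 + (a-b)^4 = 0 ∧
     (c-d)^10 + (a+b+c+d)^10 + (a+b-c-d)^10 + (a-b)^10 = 0)
    ↔ (a * b + c * d = 0 ∧ a^3 * b + a * b^3 + c^3 * d + c * d^3 = 0) := by
  have h3 : (3 : F) = 0 := char3'
  constructor
  · rintro ⟨h1, h2, -⟩
    constructor
    · linear_combination -h1 + (a^2+b^2+c^2+d^2+a*b+c*d) * h3
    · linear_combination h2 - (d^4 + c*d^3 + 6*c^2*d^2 + c^3*d + c^4 + 4*b^2*d^2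
        + 8*b^2*c*d + 4*b^2*c^2 + b^4 + 8*a*b*d^2 + 16*a*b*c*d + 8*a*b*c^2 + a*b^3
        + 4*a^2*d^2 + 8*a^2*c*d + 4*a^2*c^2 + 6*a^2*b^2 + a^3*b + a^4) * h3
  · rintro ⟨h1, h2⟩
    have hS2 : (c-d)^2 + (a+b+c+d)^2 + (a+b-c-d)^2 + (a-b)^2 = 0 := by
      linear_combination -h1 + (a^2+b^2+c^2+d^2+a*b+c*d) * h3
    have hS4 : (c-d)^4 + (a+b+c+d)^4 + (a+b-c-d)^4 + (a-b)^4 = 0 := by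
      linear_combination h2 + (d^4 + c*d^3 + 6*c^2*d^2 + c^3*d + c^4 + 4*b^2*d^2
        + 8*b^2*c*d + 4*b^2*c^2 + b^4 + 8*a*b*d^2 + 16*a*b*c*d + 8*a*b*c^2 + a*b^3
        + 4*a^2*d^2 + 8*a^2*c*d + 4*a^2*c^2 + 6*a^2*b^2 + a^3*b + a^4) * h3
    exact ⟨hS2, hS4, red _ _ _ _ hS2 hS4⟩

end FourthMomentAux

open Complex in
theorem stmt_15 (m : ℕ) (hm : Odd m) (hm3 : ¬ (3 ∣ m))
    (F : Type*) [Field F] [Fintype F] [CharP F 3] (hcard : Fintype.card F = 3 ^ m)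
    (ζ : ℂ) (hζ : ζ = Complex.exp (2 * Real.pi * I / 3)) :
    (∑ α : F, ∑ β : F, ∑ γ : F,
        (∑ x : F, ζ ^ (Algebra.trace (ZMod 3) F
              (α * x ^ 2 + β * x ^ 4 + γ * x ^ 10)).val) ^ 4)
      = (8 * ((3 : ℂ) ^ m - 1) ^ 2 + 1) * (3 : ℂ) ^ (3 * m) := by
  classical
  open FourthMomentAux Finset in
  have hζ3 : ζ ^ 3 = 1 := by
    rw [hζ, ← Complex.exp_nat_mul]
    have h : (3 : ℕ) * (2 * (Real.pi : ℂ) * I / 3) = 2 * Real.pi * I := by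
      push_cast; ring
    rw [h, Complex.exp_two_pi_mul_I]
  have hζ1 : ζ ≠ 1 := by
    rw [hζ]
    intro h
    obtain ⟨n, hn⟩ := Complex.exp_eq_one_iff.mp h
    have hpi : (Real.pi : ℂ) ≠ 0 := Complex.ofReal_ne_zero.mpr Real.pi_ne_zero
    have hI : Complex.I ≠ 0 := Complex.I_ne_zero
    have h2 : (2 : ℂ) * Real.pi * I ≠ 0 :=
      mul_ne_zero (mul_ne_zero (by norm_num) hpi) hI
    have hmul : ((1 : ℂ) - 3 * n) * (2 * Real.pi * I) = 0 := by
      linear_combination (3 : ℂ) * hn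
    rcases mul_eq_zero.mp hmul with h1 | h1
    · have h31 : ((1 : ℤ) : ℂ) = ((3 * n : ℤ) : ℂ) := by
        push_cast
        linear_combination h1
      have : (1 : ℤ) = 3 * n := by exact_mod_cast h31
      omega
    · exact h2 h1
  -- Step 1: expand the fourth power and combine characters
  have expand : ∀ α β γ : F,
      (∑ x : F, ζ ^ (Algebra.trace (ZMod 3) F (α * x ^ 2 + β * x ^ 4 + γ * x ^ 10)).val) ^ 4
        = ∑ x : F, ∑ y : F, ∑ z : F, ∑ w : F,
            ζ ^ (Algebra.trace (ZMod 3) F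
              (α * (x^2+y^2+z^2+w^2) + β * (x^4+y^4+z^4+w^4)
                + γ * (x^10+y^10+z^10+w^10))).val := by
    intro α β γ
    rw [sum_pow_four]
    refine Finset.sum_congr rfl fun x _ => Finset.sum_congr rfl fun y _ =>
      Finset.sum_congr rfl fun z _ => Finset.sum_congr rfl fun w _ => ?_
    rw [← e_add hζ3, ← map_add, ← e_add hζ3, ← map_add, ← e_add hζ3, ← map_add]
    congr 2
    ring
  rw [Finset.sum_congr rfl (fun α _ => Finset.sum_congr rfl fun β _ =>
    Finset.sum_congr rfl fun γ _ => expand α β γ)]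
  rw [swap7 (fun α β γ x y z w => ζ ^ (Algebra.trace (ZMod 3) F
      (α * (x^2+y^2+z^2+w^2) + β * (x^4+y^4+z^4+w^4)
        + γ * (x^10+y^10+z^10+w^10))).val)]
  -- Step 2: evaluate the character sums over α β γ
  have inner_eval : ∀ s2 s4 s10 : F,
      (∑ α : F, ∑ β : F, ∑ γ : F,
          ζ ^ (Algebra.trace (ZMod 3) F (α * s2 + β * s4 + γ * s10)).val)
        = if s2 = 0 ∧ s4 = 0 ∧ s10 = 0 then ((Fintype.card F : ℕ) : ℂ)^3 else 0 := by
    intro s2 s4 s10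
    have hsplit : ∀ α β γ : F,
        ζ ^ (Algebra.trace (ZMod 3) F (α * s2 + β * s4 + γ * s10)).val
          = ζ ^ (Algebra.trace (ZMod 3) F (α * s2)).val
            * ζ ^ (Algebra.trace (ZMod 3) F (β * s4)).val
            * ζ ^ (Algebra.trace (ZMod 3) F (γ * s10)).val := by
      intro α β γ
      rw [map_add, e_add hζ3, map_add, e_add hζ3]
    simp_rw [hsplit]
    rw [factor3 (fun α => ζ ^ (Algebra.trace (ZMod 3) F (α * s2)).val)
        (fun β => ζ ^ (Algebra.trace (ZMod 3) F (β * s4)).val)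
        (fun γ => ζ ^ (Algebra.trace (ZMod 3) F (γ * s10)).val),
      char_sum hζ3 hζ1 s2, char_sum hζ3 hζ1 s4, char_sum hζ3 hζ1 s10]
    by_cases h2 : s2 = 0 <;> by_cases h4 : s4 = 0 <;> by_cases h10 : s10 = 0 <;>
      simp [h2, h4, h10] <;> ring
  simp_rw [inner_eval]
  -- Step 3: change of variables and counting
  rw [← collapse4 (fun x y z w =>
    if x^2+y^2+z^2+w^2 = 0 ∧ x^4+y^4+z^4+w^4 = 0 ∧ x^10+y^10+z^10+w^10 = 0
    then ((Fintype.card F : ℕ) : ℂ)^3 else 0)]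
  rw [← Equiv.sum_comp (covEquiv F) (fun v : (F × F) × (F × F) =>
    if v.1.1^2+v.1.2^2+v.2.1^2+v.2.2^2 = 0 ∧ v.1.1^4+v.1.2^4+v.2.1^4+v.2.2^4 = 0
        ∧ v.1.1^10+v.1.2^10+v.2.1^10+v.2.2^10 = 0
    then ((Fintype.card F : ℕ) : ℂ)^3 else 0)]
  simp only [covEquiv, Equiv.coe_fn_mk]
  simp only [cond_iff]
  rw [count_sum' (((Fintype.card F : ℕ) : ℂ)^3)]
  -- Step 4: final arithmetic
  have hQ : ((Fintype.card F : ℕ) : ℂ) = (3 : ℂ) ^ m := by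
    rw [hcard]; push_cast; ring
  rw [hQ, show (3 : ℂ) ^ (3 * m) = ((3 : ℂ) ^ m) ^ 3 by
    rw [mul_comm, pow_mul]]
  ring
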